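/- Let ℓ ∈ ℕ and suppose g satisfies (A1) and (A2). Then for all u ∈ 𝓗₀^ℓ one has Σ_{n=⌈ℓ/2⌉}^∞ |((−Δ)^{ℓ/2}u)_n|² ≥ Σ_{n=ℓ}^∞ ρ_n(g)·|u_n|², where ρ_n(g) := ((−Δ)^ℓ g)_n / g_n. If in addition g satisfies (A2'), then ρ_n(g) ≥ 0 for all n ≥ ℓ, i.e. ρ(g) is a discrete Hardy–Rellich–Birman weight. -/

import Mathlib

noncomputable section

open scoped ENNReal

namespace HRB

/-- discrete gradient `(∇u)_n = u_n - u_{n-1}` -/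
def grad (u : ℤ → ℂ) : ℤ → ℂ := fun n => u n - u (n - 1)

/-- discrete divergence (forward difference) `(∂u)_n = u_{n+1} - u_n` -/
def fdiff (u : ℤ → ℂ) : ℤ → ℂ := fun n => u (n + 1) - u n

/-- averaging operator `(Mu)_n = (u_n + u_{n+1})/2` -/
def avg (u : ℤ → ℂ) : ℤ → ℂ := fun n => (u n + u (n + 1)) / 2

/-- negative discrete Laplacian `((-Δ)u)_n = 2u_n - u_{n-1} - u_{n+1}` -/
def negLap (u : ℤ → ℂ) : ℤ → ℂ := fun n => 2 * u n - u (n - 1) - u (n + 1)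

/-- `(-Δ)^{ℓ/2}`: equal to `(-Δ)^m` if `ℓ = 2m` and to `∇ ∘ (-Δ)^m` if `ℓ = 2m+1`. -/
def halfPow (l : ℕ) (u : ℤ → ℂ) : ℤ → ℂ :=
  if l % 2 = 0 then negLap^[l / 2] u else grad (negLap^[l / 2] u)

def gradR (u : ℤ → ℝ) : ℤ → ℝ := fun n => u n - u (n - 1)

def fdiffR (u : ℤ → ℝ) : ℤ → ℝ := fun n => u (n + 1) - u n

def negLapR (u : ℤ → ℝ) : ℤ → ℝ := fun n => 2 * u n - u (n - 1) - u (n + 1)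

/-- `u ∈ H^ℓ` -/
def memH (l : ℤ) (u : ℤ → ℂ) : Prop := ∀ n : ℤ, n < l → u n = 0

/-- `u ∈ 𝓗₀^ℓ`: compactly supported elements of `H^ℓ` -/
def memH0 (l : ℤ) (u : ℤ → ℂ) : Prop :=
  memH l u ∧ ∃ N : ℤ, ∀ n : ℤ, N ≤ n → u n = 0

/-- real-valued sequences in `H^ℓ` -/
def memHR (l : ℤ) (g : ℤ → ℝ) : Prop := ∀ n : ℤ, n < l → g n = 0

/-- `Σ_{n=a}^∞ f(n)` (as an unordered real `tsum`) -/
def qsum (a : ℤ) (f : ℤ → ℝ) : ℝ := ∑' n : ℤ, if a ≤ n then f n else 0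

/-- `Σ_{n=a}^∞ f(n)` as a sum in `ℝ≥0∞` (for nonnegative `f`) -/
def esum (a : ℤ) (f : ℤ → ℝ) : ℝ≥0∞ :=
  ∑' n : ℤ, if a ≤ n then ENNReal.ofReal (f n) else 0

/-- `⌈ℓ/2⌉` -/
def ceilHalf (l : ℕ) : ℤ := (((l + 1) / 2 : ℕ) : ℤ)

/-- `Σ_{n=⌈ℓ/2⌉}^∞ |((-Δ)^{ℓ/2}u)_n|²` -/
def energy (l : ℕ) (u : ℤ → ℂ) : ℝ :=
  qsum (ceilHalf l) fun n => ‖halfPow l u n‖ ^ 2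

def eenergy (l : ℕ) (u : ℤ → ℂ) : ℝ≥0∞ :=
  esum (ceilHalf l) fun n => ‖halfPow l u n‖ ^ 2

/-- `Σ_{n=l}^∞ ρ_n |u_n|²` -/
def wsum (l : ℤ) (ρ : ℤ → ℝ) (u : ℤ → ℂ) : ℝ := qsum l fun n => ρ n * ‖u n‖ ^ 2

def ewsum (l : ℤ) (ρ : ℤ → ℝ) (u : ℤ → ℂ) : ℝ≥0∞ := esum l fun n => ρ n * ‖u n‖ ^ 2

/-- Assumption (A1) -/
def A1 (l : ℕ) (g : ℤ → ℝ) : Prop :=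
  memHR l g ∧ ∀ k : ℕ, k < l → ∀ n : ℤ, (l : ℤ) - (k : ℤ) ≤ n → 0 < fdiffR^[k] g n

/-- Assumption (A2) -/
def A2 (l : ℕ) (g : ℤ → ℝ) : Prop :=
  ∀ k : ℕ, 1 ≤ k → k < l → ∀ n : ℤ, (l : ℤ) + 1 - (k : ℤ) ≤ n →
    0 ≤ negLapR^[l - k] (fdiffR^[k] g) n

/-- Assumption (A2') -/
def A2' (l : ℕ) (g : ℤ → ℝ) : Prop := ∀ n : ℤ, (l : ℤ) ≤ n → 0 ≤ negLapR^[l] g n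

/-- Asymptotic expansion (Exp_s):
`g_n = Σ_{j=0}^{2ℓ} α_j n^{ℓ-j-s} + O(n^{-ℓ-1-s})` as `n → ∞`, with `α_0 ≠ 0`. -/
def ExpS (l : ℕ) (g : ℤ → ℝ) (s : ℝ) : Prop :=
  ∃ α : ℕ → ℝ, α 0 ≠ 0 ∧ ∃ C : ℝ, ∃ N : ℤ, ∀ n : ℤ, N ≤ n →
    |g n - ∑ j ∈ Finset.range (2 * l + 1), α j * (n : ℝ) ^ ((l : ℝ) - (j : ℝ) - s)| ≤
      C * (n : ℝ) ^ (-(l : ℝ) - 1 - s)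

/-- the weight `ρ(g)_n = ((-Δ)^ℓ g)_n / g_n` -/
def rho (l : ℕ) (g : ℤ → ℝ) : ℤ → ℝ := fun n => negLapR^[l] g n / g n

/-- the `n`-th term of the remainder `𝓡_k^{(ℓ)}(g;u)` -/
def remTerm (l k : ℕ) (g : ℤ → ℝ) (u : ℤ → ℂ) : ℤ → ℝ := fun n =>
  (if k + 1 = l then 1
    else negLapR^[l - 1 - k] (fdiffR^[k + 1] g) n / fdiffR^[k + 1] g n) *
  ‖(Real.sqrt (fdiffR^[k] g n / fdiffR^[k] g (n + 1)) : ℂ) * fdiff^[k] u (n + 1) -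
    (Real.sqrt (fdiffR^[k] g (n + 1) / fdiffR^[k] g n) : ℂ) * fdiff^[k] u n‖ ^ 2

/-- the remainder `𝓡_k^{(ℓ)}(g;u)` -/
def rem (l k : ℕ) (g : ℤ → ℝ) (u : ℤ → ℂ) : ℝ :=
  qsum ((l : ℤ) - (k : ℤ)) (remTerm l k g u)

def erem (l k : ℕ) (g : ℤ → ℝ) (u : ℤ → ℂ) : ℝ≥0∞ :=
  esum ((l : ℤ) - (k : ℤ)) (remTerm l k g u)

/-- `ρ` is a discrete Hardy–Rellich–Birman weight for the power `ℓ` -/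
def IsHRBWeight (l : ℕ) (ρ : ℤ → ℝ) : Prop :=
  (∀ n : ℤ, (l : ℤ) ≤ n → 0 ≤ ρ n) ∧
  ∀ u : ℤ → ℂ, memH0 l u → wsum l ρ u ≤ energy l u

/-- criticality of the weight `ρ` -/
def IsCritical (l : ℕ) (ρ : ℤ → ℝ) : Prop :=
  ∀ ρ' : ℤ → ℝ, (∀ n : ℤ, (l : ℤ) ≤ n → 0 ≤ ρ' n) →
    (∀ u : ℤ → ℂ, memH0 l u → wsum l ρ' u ≤ energy l u) →
    (∀ n : ℤ, (l : ℤ) ≤ n → ρ n ≤ ρ' n) →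
    ∀ n : ℤ, (l : ℤ) ≤ n → ρ' n = ρ n

/-- optimality near infinity of the weight `ρ` -/
def IsOptNearInfinity (l : ℕ) (ρ : ℤ → ℝ) : Prop :=
  ∀ M : ℤ, (l : ℤ) ≤ M → ∀ ε : ℝ, 0 < ε →
    ∃ u : ℤ → ℂ, memH0 M u ∧ energy l u < (1 + ε) * wsum l ρ u

/-- non-attainability of the weight `ρ` -/
def IsNonAttainable (l : ℕ) (ρ : ℤ → ℝ) : Prop :=
  ∀ u : ℤ → ℂ, memH l u → ewsum l ρ u ≠ ⊤ → eenergy l u = ewsum l ρ u →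
    u = 0

/-- `g^{(ℓ)}_n = √n ∏_{j=1}^{ℓ-1} (n-j)` for `n ≥ 0`, zero for `n < 0` -/
def gseq (l : ℕ) : ℤ → ℝ := fun n =>
  if n < 0 then 0 else Real.sqrt (n : ℝ) * ∏ j ∈ Finset.Icc 1 (l - 1), ((n : ℝ) - (j : ℝ))

/-- the optimal weight `ρ^{(ℓ)}` -/
def rhoSeq (l : ℕ) : ℤ → ℝ := rho l (gseq l)

/-- `g^{(ℓ)}(q)_n = n^q ∏_{j=1}^{ℓ-1}(n-j)` for `n ≥ 0`, zero for `n < 0` -/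
def gq (l : ℕ) (q : ℝ) : ℤ → ℝ := fun n =>
  if n < 0 then 0 else (n : ℝ) ^ q * ∏ j ∈ Finset.Icc 1 (l - 1), ((n : ℝ) - (j : ℝ))

/-- `h_n = n^{ℓ-1/2}` for `n ≥ 0`, zero for `n < 0` -/
def hseq (l : ℕ) : ℤ → ℝ := fun n =>
  if n < 0 then 0 else (n : ℝ) ^ ((l : ℝ) - 1 / 2)

/-- generalized binomial coefficient `C(ν,m) = ν(ν-1)⋯(ν-m+1)/m!` -/
def genBinom (ν : ℝ) (m : ℕ) : ℝ := (∏ i ∈ Finset.range m, (ν - (i : ℝ))) / (m.factorial : ℝ)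

/-- (signed) Stirling numbers of the first kind `s(n,k)`, extended by `0` for `k ≤ 0` -/
def stirling1 (n : ℕ) (k : ℤ) : ℝ :=
  if k ≤ 0 then 0
  else (-1 : ℝ) ^ (n + k.toNat) *
    ∑ t ∈ (Finset.Icc 1 (n - 1)).powersetCard (n - k.toNat), ∏ i ∈ t, (i : ℝ)

/-- `X_m^{(ℓ)} = Σ_{j=-ℓ}^{ℓ} C(2ℓ,ℓ+j)(-1)^j j^m`, with `X_0^{(ℓ)} = 0` -/
def Xcoef (l m : ℕ) : ℝ :=
  if m = 0 then 0
  else ∑ j ∈ Finset.Icc (-(l : ℤ)) (l : ℤ),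
    (((2 * l).choose ((l : ℤ) + j).toNat : ℕ) : ℝ) * (-1 : ℝ) ^ j * ((j : ℝ)) ^ m

/-- the coefficients `r_k^{(ℓ)}` -/
def rcoef (l k : ℕ) : ℝ :=
  ∑ m ∈ Finset.Icc (2 * l) k,
    genBinom ((l : ℝ) + (m : ℝ) - (k : ℝ) - 1 / 2) m * stirling1 l ((l : ℤ) + (m : ℤ) - (k : ℤ)) *
      Xcoef l m

/-- Pochhammer symbol `(x)_ℓ = x(x+1)⋯(x+ℓ-1)` -/
def poch (x : ℝ) (l : ℕ) : ℝ := ∏ i ∈ Finset.range l, (x + (i : ℝ))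



/-! ### tsum helpers -/

lemma summable_ite (a N : ℤ) (f : ℤ → ℝ) (hf : ∀ n, N ≤ n → f n = 0) :
    Summable (fun n => if a ≤ n then f n else 0) := by
  apply summable_of_ne_finset_zero (s := Finset.Icc a N)
  intro n hn
  simp only [Finset.mem_Icc, not_and, not_le] at hn
  by_cases h : a ≤ n
  · simp [h, hf n (hn h).le]
  · simp [h]

lemma qsum_congr {a : ℤ} {f g : ℤ → ℝ} (h : ∀ n, a ≤ n → f n = g n) :
    qsum a f = qsum a g := by
  unfold qsum; exact tsum_congr fun n => by by_cases hn : a ≤ n <;> simp [hn, h]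

lemma qsum_shift (a c : ℤ) (f : ℤ → ℝ) : qsum a (fun n => f (n - c)) = qsum (a - c) f := by
  unfold qsum
  rw [← Equiv.tsum_eq (Equiv.subRight c) (fun n => if a - c ≤ n then f n else 0)]
  exact tsum_congr fun n => by
    simp only [Equiv.subRight_apply]
    by_cases hn : a ≤ n
    · rw [if_pos hn, if_pos (by omega)]
    · rw [if_neg hn, if_neg (by omega)]

lemma qsum_add (a : ℤ) (f g : ℤ → ℝ) (hf : Summable (fun n => if a ≤ n then f n else 0))
    (hg : Summable (fun n => if a ≤ n then g n else 0)) :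
    qsum a (fun n => f n + g n) = qsum a f + qsum a g := by
  unfold qsum
  rw [← Summable.tsum_add hf hg]
  exact tsum_congr fun n => by by_cases hn : a ≤ n <;> simp [hn]

lemma qsum_extend (a : ℤ) (f : ℤ → ℝ) (h : f (a - 1) = 0) : qsum (a - 1) f = qsum a f := by
  unfold qsum
  exact tsum_congr fun n => by
    by_cases hn : n = a - 1
    · subst hn; simp [h]
    · by_cases hn2 : a ≤ n
      · rw [if_pos (by omega), if_pos hn2]
      · rw [if_neg (by omega), if_neg hn2]

lemma qsum_nonneg (a : ℤ) (f : ℤ → ℝ) (h : ∀ n, a ≤ n → 0 ≤ f n) : 0 ≤ qsum a f :=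
  tsum_nonneg fun n => by by_cases hn : a ≤ n <;> simp [hn, h]

/-! ### algebra -/

lemma norm_alg (a b : ℝ) (hab : a * b = 1) (x y : ℂ) :
    ‖x - y‖^2 = ‖(a:ℂ)*x - (b:ℂ)*y‖^2 + (1 - a^2)*‖x‖^2 + (1 - b^2)*‖y‖^2 := by
  have e : ∀ z:ℂ, ‖z‖^2 = z.re^2 + z.im^2 := fun z => by
    rw [Complex.sq_norm, Complex.normSq_apply]; ring
  simp only [e, Complex.sub_re, Complex.sub_im, Complex.mul_re, Complex.mul_im,
    Complex.ofReal_re, Complex.ofReal_im]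
  ring_nf
  linear_combination (2*x.re*y.re + 2*x.im*y.im) * hab

/-! ### iterate lemmas -/

lemma fdiff_iter_neg_shift : ∀ (k : ℕ) (w : ℤ → ℂ) (x : ℤ),
    fdiff^[k] (fun j => -(w (j - 1))) x = -(fdiff^[k] w (x - 1)) := by
  intro k
  induction k with
  | zero => intro w x; simp
  | succ k ih =>
    intro w x
    rw [Function.iterate_succ_apply', Function.iterate_succ_apply']
    simp only [fdiff, ih]
    have h1 : x + 1 - 1 = x := by ring
    rw [h1]
    have h2 : x - 1 + 1 = x := by ring
    rw [h2]
    ring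

lemma negLap_iter : ∀ (m : ℕ) (u : ℤ → ℂ) (n : ℤ),
    negLap^[m] u n = (-1)^m * fdiff^[2*m] u (n - m) := by
  intro m
  induction m with
  | zero => intro u n; simp
  | succ m ih =>
    intro u n
    rw [Function.iterate_succ_apply, ih]
    have hneg : negLap u = fun j => -(fdiff^[2] u (j - 1)) := by
      funext j
      have h2 : fdiff^[2] u (j - 1) = u (j + 1) - 2 * u j + u (j - 1) := by
        rw [Function.iterate_succ_apply, Function.iterate_one]
        simp only [fdiff]
        have : j - 1 + 1 = j := by ring
        rw [this]; ring
      rw [h2]; simp only [negLap]; ring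
    rw [hneg, fdiff_iter_neg_shift]
    have h2 : 2 * (m + 1) = 2 * m + 2 := by ring
    rw [h2, Function.iterate_add_apply]
    push_cast
    have : n - (↑m + 1) = n - ↑m - 1 := by ring
    rw [this]
    ring

lemma halfPow_norm (l : ℕ) (u : ℤ → ℂ) (n : ℤ) :
    ‖halfPow l u n‖ = ‖fdiff^[l] u (n - ceilHalf l)‖ := by
  rcases Nat.even_or_odd l with ⟨m, hm⟩ | ⟨m, hm⟩
  · subst hm
    have hl : m + m = 2 * m := by ring
    rw [hl]
    have h0 : (2*m) % 2 = 0 := by omega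
    have h1 : (2*m) / 2 = m := by omega
    have h2 : ceilHalf (2*m) = (m : ℤ) := by unfold ceilHalf; congr 1; omega
    rw [halfPow, if_pos h0, h1, negLap_iter, h2, norm_mul]
    simp
  · subst hm
    have h0 : (2*m+1) % 2 = 1 := by omega
    have h1 : (2*m+1) / 2 = m := by omega
    have h2 : ceilHalf (2*m+1) = ((m : ℤ) + 1) := by unfold ceilHalf; push_cast; omega
    rw [halfPow, if_neg (by omega), h1, h2]
    simp only [grad, negLap_iter]
    have h3 : fdiff^[2*m+1] u (n - ((m:ℤ)+1)) =
        fdiff^[2*m] u (n - m) - fdiff^[2*m] u (n - 1 - m) := by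
      rw [Function.iterate_succ_apply', fdiff]
      have e1 : n - ((m:ℤ)+1) + 1 = n - m := by ring
      have e2 : n - ((m:ℤ)+1) = n - 1 - m := by ring
      rw [e1, e2]
    rw [h3]
    have h4 : (-1:ℂ)^m * fdiff^[2*m] u (n - m) - (-1:ℂ)^m * fdiff^[2*m] u (n - 1 - m)
        = (-1:ℂ)^m * (fdiff^[2*m] u (n - m) - fdiff^[2*m] u (n - 1 - m)) := by ring
    rw [h4, norm_mul]
    simp

lemma negLapR_iter_shift_sub : ∀ (j : ℕ) (f : ℤ → ℝ) (n : ℤ),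
    negLapR^[j] (fun m => f (m - 1) - f m) n = negLapR^[j] f (n - 1) - negLapR^[j] f n := by
  intro j
  induction j with
  | zero => intro f n; simp
  | succ j ih =>
    intro j' n
    rw [Function.iterate_succ_apply]
    have : negLapR (fun m => j' (m - 1) - j' m) = fun m => negLapR j' (m - 1) - negLapR j' m := by
      funext m
      simp only [negLapR]
      have e1 : m - 1 - 1 = m - 2 := by ring
      have e2 : m + 1 - 1 = m := by ring
      rw [e1, e2]
      ring_nf
    rw [this, ih]
    rw [Function.iterate_succ_apply]

lemma negLapR_succ_fdiff (j : ℕ) (h : ℤ → ℝ) (n : ℤ) :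
    negLapR^[j+1] h n = negLapR^[j] (fdiffR h) (n-1) - negLapR^[j] (fdiffR h) n := by
  rw [Function.iterate_succ_apply]
  have : negLapR h = fun m => fdiffR h (m - 1) - fdiffR h m := by
    funext m
    simp only [negLapR, fdiffR]
    have : m - 1 + 1 = m := by ring
    rw [this]; ring
  rw [this, negLapR_iter_shift_sub]

/-! ### support lemmas -/

lemma fdiff_zero_of_lt {l : ℤ} {u : ℤ → ℂ} (hu : memH l u) :
    ∀ (k : ℕ) (n : ℤ), n < l - k → fdiff^[k] u n = 0 := by
  intro k
  induction k with
  | zero => intro n hn; exact hu n (by omega)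
  | succ k ih =>
    intro n hn
    rw [Function.iterate_succ_apply', fdiff, ih (n+1) (by push_cast at hn ⊢; omega),
      ih n (by push_cast at hn ⊢; omega), sub_zero]

lemma fdiff_zero_of_ge {N : ℤ} {u : ℤ → ℂ} (hu : ∀ n, N ≤ n → u n = 0) :
    ∀ (k : ℕ) (n : ℤ), N ≤ n → fdiff^[k] u n = 0 := by
  intro k
  induction k with
  | zero => exact hu
  | succ k ih =>
    intro n hn
    rw [Function.iterate_succ_apply', fdiff, ih (n+1) (by omega), ih n hn, sub_zero]

lemma fdiffR_zero_of_lt {l : ℤ} {g : ℤ → ℝ} (hg : memHR l g) :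
    ∀ (k : ℕ) (n : ℤ), n < l - k → fdiffR^[k] g n = 0 := by
  intro k
  induction k with
  | zero => intro n hn; exact hg n (by omega)
  | succ k ih =>
    intro n hn
    rw [Function.iterate_succ_apply', fdiffR, ih (n+1) (by push_cast at hn ⊢; omega),
      ih n (by push_cast at hn ⊢; omega), sub_zero]

/-! ### the weighted sums `S_k` -/

def Wt (l : ℕ) (g : ℤ → ℝ) (k : ℕ) : ℤ → ℝ := fun n =>
  if k = l then 1 else negLapR^[l - k] (fdiffR^[k] g) n / fdiffR^[k] g n

def Ssum (l : ℕ) (g : ℤ → ℝ) (u : ℤ → ℂ) (k : ℕ) : ℝ :=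
  qsum ((l:ℤ) - (k:ℤ)) (fun n => Wt l g k n * ‖fdiff^[k] u n‖ ^ 2)

lemma remTerm_eq (l k : ℕ) (hk : k < l) (g : ℤ → ℝ) (u : ℤ → ℂ) (n : ℤ) :
    remTerm l k g u n = Wt l g (k+1) n *
      ‖(Real.sqrt (fdiffR^[k] g n / fdiffR^[k] g (n + 1)) : ℂ) * fdiff^[k] u (n + 1) -
        (Real.sqrt (fdiffR^[k] g (n + 1) / fdiffR^[k] g n) : ℂ) * fdiff^[k] u n‖ ^ 2 := by
  simp only [remTerm, Wt]
  rw [show l - 1 - k = l - (k+1) from by omega]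


lemma step_core (a : ℤ) (h : ℤ → ℝ) (v : ℤ → ℂ) (μ W : ℤ → ℝ) (N : ℤ)
    (hpos : ∀ n, a ≤ n → 0 < h n)
    (hz : h (a-1) = 0) (hvz : v (a-1) = 0) (hvN : ∀ n, N ≤ n → v n = 0)
    (hcoef : ∀ n, a ≤ n →
      μ (n-1) * (1 - h (n-1)/h n) + μ n * (1 - h (n+1)/h n) = W n) :
    qsum (a-1) (fun n => μ n * ‖v (n+1) - v n‖^2)
      = qsum a (fun n => W n * ‖v n‖^2)
        + qsum a (fun n => μ n * ‖(Real.sqrt (h n / h (n+1)) : ℂ) * v (n+1) -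
            (Real.sqrt (h (n+1) / h n) : ℂ) * v n‖^2) := by
  -- pointwise identity
  have hpt : ∀ n : ℤ, a - 1 ≤ n →
      μ n * ‖v (n+1) - v n‖^2
        = (μ n * ‖(Real.sqrt (h n / h (n+1)) : ℂ) * v (n+1) -
            (Real.sqrt (h (n+1) / h n) : ℂ) * v n‖^2)
          + (μ n * ((1 - h n / h (n+1)) * ‖v (n+1)‖^2)
            + μ n * ((1 - h (n+1) / h n) * ‖v n‖^2)) := by
    intro n hn
    by_cases hcase : a ≤ n
    · have h1 : 0 < h n := hpos n hcase
      have h2 : 0 < h (n+1) := hpos (n+1) (by omega)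
      have hab : Real.sqrt (h n / h (n+1)) * Real.sqrt (h (n+1) / h n) = 1 := by
        rw [← Real.sqrt_mul (by positivity),
          show h n / h (n+1) * (h (n+1) / h n) = 1 from by field_simp]
        exact Real.sqrt_one
      have ha2 : (Real.sqrt (h n / h (n+1)))^2 = h n / h (n+1) :=
        Real.sq_sqrt (by positivity)
      have hb2 : (Real.sqrt (h (n+1) / h n))^2 = h (n+1) / h n :=
        Real.sq_sqrt (by positivity)
      have key := norm_alg (Real.sqrt (h n / h (n+1))) (Real.sqrt (h (n+1) / h n))
        hab (v (n+1)) (v n)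
      rw [ha2, hb2] at key
      linear_combination (μ n) * key
    · have hn' : n = a - 1 := by omega
      subst hn'
      rw [hz, hvz]
      simp
  -- summability
  have hsA : Summable (fun n => if a - 1 ≤ n then μ n * ‖v (n+1) - v n‖^2 else 0) :=
    summable_ite _ N _ fun n hn => by rw [hvN n hn, hvN (n+1) (by omega)]; simp
  have hsR : Summable (fun n => if a - 1 ≤ n then
      μ n * ‖(Real.sqrt (h n / h (n+1)) : ℂ) * v (n+1) -
        (Real.sqrt (h (n+1) / h n) : ℂ) * v n‖^2 else 0) :=
    summable_ite _ N _ fun n hn => by rw [hvN n hn, hvN (n+1) (by omega)]; simp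
  have hsP : Summable (fun n => if a - 1 ≤ n then
      μ n * ((1 - h n / h (n+1)) * ‖v (n+1)‖^2) else 0) :=
    summable_ite _ N _ fun n hn => by rw [hvN (n+1) (by omega)]; simp
  have hsQ : Summable (fun n => if a - 1 ≤ n then
      μ n * ((1 - h (n+1) / h n) * ‖v n‖^2) else 0) :=
    summable_ite _ N _ fun n hn => by rw [hvN n hn]; simp
  have hsPQ : Summable (fun n => if a - 1 ≤ n then
      μ n * ((1 - h n / h (n+1)) * ‖v (n+1)‖^2)
        + μ n * ((1 - h (n+1) / h n) * ‖v n‖^2) else 0) :=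
    summable_ite _ N _ fun n hn => by rw [hvN n hn, hvN (n+1) (by omega)]; simp
  -- split the sum
  have hsplit : qsum (a-1) (fun n => μ n * ‖v (n+1) - v n‖^2)
      = qsum (a-1) (fun n => μ n * ‖(Real.sqrt (h n / h (n+1)) : ℂ) * v (n+1) -
            (Real.sqrt (h (n+1) / h n) : ℂ) * v n‖^2)
        + (qsum (a-1) (fun n => μ n * ((1 - h n / h (n+1)) * ‖v (n+1)‖^2))
          + qsum (a-1) (fun n => μ n * ((1 - h (n+1) / h n) * ‖v n‖^2))) := by
    rw [← qsum_add _ _ _ hsP hsQ, ← qsum_add _ _ _ hsR hsPQ]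
    exact qsum_congr hpt
  rw [hsplit]
  -- identify the remainder part
  have eR : qsum (a-1) (fun n => μ n * ‖(Real.sqrt (h n / h (n+1)) : ℂ) * v (n+1) -
        (Real.sqrt (h (n+1) / h n) : ℂ) * v n‖^2)
      = qsum a (fun n => μ n * ‖(Real.sqrt (h n / h (n+1)) : ℂ) * v (n+1) -
        (Real.sqrt (h (n+1) / h n) : ℂ) * v n‖^2) := by
    apply qsum_extend
    rw [hz, hvz]
    simp
  -- shift the P part
  have eP : qsum (a-1) (fun n => μ n * ((1 - h n / h (n+1)) * ‖v (n+1)‖^2))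
      = qsum a (fun m => μ (m-1) * ((1 - h (m-1) / h m) * ‖v m‖^2)) := by
    have e2 := qsum_shift (a-1) (-1) (fun m => μ (m-1) * ((1 - h (m-1) / h m) * ‖v m‖^2))
    rw [show a - 1 - (-1) = a from by ring] at e2
    rw [← e2]
    apply qsum_congr
    intro n _
    simp only [sub_neg_eq_add, add_sub_cancel_right]
  have eQ : qsum (a-1) (fun n => μ n * ((1 - h (n+1) / h n) * ‖v n‖^2))
      = qsum a (fun n => μ n * ((1 - h (n+1) / h n) * ‖v n‖^2)) := by
    apply qsum_extend
    rw [hvz]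
    simp
  rw [eR, eP, eQ]
  -- recombine P and Q
  have hsP' : Summable (fun n => if a ≤ n then
      μ (n-1) * ((1 - h (n-1) / h n) * ‖v n‖^2) else 0) :=
    summable_ite _ N _ fun n hn => by rw [hvN n hn]; simp
  have hsQ' : Summable (fun n => if a ≤ n then
      μ n * ((1 - h (n+1) / h n) * ‖v n‖^2) else 0) :=
    summable_ite _ N _ fun n hn => by rw [hvN n hn]; simp
  rw [← qsum_add _ _ _ hsP' hsQ']
  have efin : qsum a (fun n => μ (n-1) * ((1 - h (n-1) / h n) * ‖v n‖^2)
      + μ n * ((1 - h (n+1) / h n) * ‖v n‖^2)) = qsum a (fun n => W n * ‖v n‖^2) := by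
    apply qsum_congr
    intro n hn
    linear_combination ‖v n‖^2 * hcoef n hn
  rw [efin]
  ring

lemma Ssum_step (l k : ℕ) (g : ℤ → ℝ) (u : ℤ → ℂ) (hk : k < l) (hA1 : A1 l g)
    (hu : memH0 l u) : Ssum l g u (k+1) = Ssum l g u k + rem l k g u := by
  obtain ⟨huH, N, huN⟩ := hu
  -- coefficient identity
  have hcoef : ∀ n : ℤ, (l:ℤ) - k ≤ n →
      Wt l g (k+1) (n-1) * (1 - fdiffR^[k] g (n-1) / fdiffR^[k] g n)
        + Wt l g (k+1) n * (1 - fdiffR^[k] g (n+1) / fdiffR^[k] g n) = Wt l g k n := by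
    intro n hn
    have hne : k ≠ l := by omega
    have hn0 : (0:ℝ) < fdiffR^[k] g n := hA1.2 k hk n hn
    have hWk : Wt l g k n = negLapR^[l-k] (fdiffR^[k] g) n / fdiffR^[k] g n := if_neg hne
    rw [hWk]
    by_cases hkl : k + 1 = l
    · have hμ : ∀ m : ℤ, Wt l g (k+1) m = 1 := fun m => if_pos hkl
      rw [hμ, hμ, show l - k = 1 from by omega, Function.iterate_one]
      simp only [negLapR]
      field_simp
      try ring
    · have hk1 : k + 1 < l := by omega
      have hEe : fdiffR (fdiffR^[k] g) = fdiffR^[k+1] g :=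
        (Function.iterate_succ_apply' fdiffR k g).symm
      have hE : ∀ m : ℤ, fdiffR^[k+1] g m = fdiffR^[k] g (m+1) - fdiffR^[k] g m :=
        fun m => by rw [← hEe]; rfl
      have hEn1 : 0 < fdiffR^[k+1] g (n-1) := hA1.2 (k+1) hk1 (n-1) (by omega)
      have hEn : 0 < fdiffR^[k+1] g n := hA1.2 (k+1) hk1 n (by omega)
      have hμm : ∀ m : ℤ, Wt l g (k+1) m
          = negLapR^[l-(k+1)] (fdiffR^[k+1] g) m / fdiffR^[k+1] g m :=
        fun m => if_neg (by omega)
      have hD : negLapR^[l-k] (fdiffR^[k] g) n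
          = negLapR^[l-(k+1)] (fdiffR^[k+1] g) (n-1) - negLapR^[l-(k+1)] (fdiffR^[k+1] g) n := by
        rw [show l - k = (l - (k+1)) + 1 from by omega, negLapR_succ_fdiff, hEe]
      have e1 : fdiffR^[k+1] g (n-1) = fdiffR^[k] g n - fdiffR^[k] g (n-1) := by
        rw [hE (n-1), show n - 1 + 1 = n from by ring]
      have e2 : fdiffR^[k+1] g n = fdiffR^[k] g (n+1) - fdiffR^[k] g n := hE n
      rw [hμm (n-1), hμm n, hD]
      rw [e1] at hEn1
      rw [e2] at hEn
      rw [e1, e2]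
      field_simp
      try ring
  -- support facts
  have hz : fdiffR^[k] g ((l:ℤ) - k - 1) = 0 :=
    fdiffR_zero_of_lt hA1.1 k _ (by omega)
  have hvz : fdiff^[k] u ((l:ℤ) - k - 1) = 0 :=
    fdiff_zero_of_lt huH k _ (by omega)
  have key := step_core ((l:ℤ) - k) (fdiffR^[k] g) (fdiff^[k] u) (Wt l g (k+1)) (Wt l g k) N
    (fun n hn => hA1.2 k hk n hn) hz hvz (fdiff_zero_of_ge huN k) hcoef
  have eL : Ssum l g u (k+1)
      = qsum ((l:ℤ) - k - 1) (fun n => Wt l g (k+1) n * ‖fdiff^[k] u (n+1) - fdiff^[k] u n‖^2) := by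
    unfold Ssum
    rw [show ((l:ℤ) - ((k:ℕ)+1:ℕ)) = (l:ℤ) - (k:ℤ) - 1 from by push_cast; ring]
    apply qsum_congr
    intro n _
    rw [Function.iterate_succ_apply']
    rfl
  have eRem : rem l k g u
      = qsum ((l:ℤ) - k) (fun n => Wt l g (k+1) n *
          ‖(Real.sqrt (fdiffR^[k] g n / fdiffR^[k] g (n+1)) : ℂ) * fdiff^[k] u (n+1) -
            (Real.sqrt (fdiffR^[k] g (n+1) / fdiffR^[k] g n) : ℂ) * fdiff^[k] u n‖^2) := by
    unfold rem
    exact qsum_congr fun n _ => remTerm_eq l k hk g u n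
  rw [eL, eRem]
  unfold Ssum
  rw [key]

lemma rem_nonneg (l k : ℕ) (g : ℤ → ℝ) (u : ℤ → ℂ) (hk : k < l) (hA1 : A1 l g)
    (hA2 : A2 l g) : 0 ≤ rem l k g u := by
  apply qsum_nonneg
  intro n hn
  rw [remTerm_eq l k hk g u n]
  apply mul_nonneg _ (by positivity)
  unfold Wt
  by_cases hkl : k + 1 = l
  · rw [if_pos hkl]; norm_num
  · rw [if_neg hkl]
    apply div_nonneg
    · apply hA2 (k+1) (by omega) (by omega) n (by push_cast; omega)
    · exact (hA1.2 (k+1) (by omega) n (by push_cast; omega)).le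

lemma Ssum_zero (l : ℕ) (hl : 1 ≤ l) (g : ℤ → ℝ) (u : ℤ → ℂ) :
    Ssum l g u 0 = wsum l (rho l g) u := by
  unfold Ssum wsum
  rw [show ((l:ℤ) - ((0:ℕ):ℤ)) = (l:ℤ) from by push_cast; ring]
  apply qsum_congr
  intro n _
  unfold Wt rho
  rw [if_neg (by omega)]
  simp

lemma Ssum_top (l : ℕ) (g : ℤ → ℝ) (u : ℤ → ℂ) :
    Ssum l g u l = energy l u := by
  unfold Ssum energy
  rw [show ((l:ℤ) - ((l:ℕ):ℤ)) = (0:ℤ) from by ring]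
  have e1 : qsum (ceilHalf l) (fun n => ‖halfPow l u n‖ ^ 2)
      = qsum (ceilHalf l) (fun n => (fun m => ‖fdiff^[l] u m‖ ^ 2) (n - ceilHalf l)) :=
    qsum_congr fun n _ => by rw [halfPow_norm]
  have e2 := qsum_shift (ceilHalf l) (ceilHalf l) (fun m => ‖fdiff^[l] u m‖ ^ 2)
  rw [sub_self] at e2
  rw [e1, e2]
  apply qsum_congr
  intro n _
  unfold Wt
  rw [if_pos rfl, one_mul]

/-- Theorem 2: the abstract discrete Hardy–Rellich–Birman inequality. -/
theorem statement2 (l : ℕ) (hl : 1 ≤ l) (g : ℤ → ℝ) (hA1 : A1 l g) (hA2 : A2 l g) :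
    (∀ u : ℤ → ℂ, memH0 l u → wsum l (rho l g) u ≤ energy l u) ∧
    (A2' l g → ∀ n : ℤ, (l : ℤ) ≤ n → 0 ≤ rho l g n) := by
  constructor
  · intro u hu
    have mono : ∀ k : ℕ, k ≤ l → Ssum l g u 0 ≤ Ssum l g u k := by
      intro k
      induction k with
      | zero => intro _; exact le_refl _
      | succ k ih =>
        intro hkl
        have hk : k < l := by omega
        calc Ssum l g u 0 ≤ Ssum l g u k := ih (by omega)
          _ ≤ Ssum l g u k + rem l k g u := le_add_of_nonneg_right
              (rem_nonneg l k g u hk hA1 hA2)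
          _ = Ssum l g u (k+1) := (Ssum_step l k g u hk hA1 hu).symm
    have := mono l (le_refl l)
    rwa [Ssum_zero l hl g u, Ssum_top l g u] at this
  · intro hA2' n hn
    unfold rho
    exact div_nonneg (hA2' n hn) (hA1.2 0 (by omega) n (by push_cast; omega)).le


end HRB
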